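/- Let ψ : (0,∞) → ℝ satisfy ψ(x) = a₁·ψ(b₁·x) and ψ(x) = a₂·ψ(b₂·x) for all x > 0, where a₁, a₂, b₁, b₂ > 1, aᵢ·bᵢ^(–α) = 1 for a common α > 0, log b₁ / log b₂ is irrational, and ψ is continuous. Then ψ(x) = λ·x^(–α) for all x > 0, for some constant λ ≥ 0. -/

import Mathlib

open Real

theorem stmt_13 (ψ : ℝ → ℝ) (a₁ a₂ b₁ b₂ α : ℝ)
    (ha₁ : 1 < a₁) (ha₂ : 1 < a₂) (hb₁ : 1 < b₁) (hb₂ : 1 < b₂) (hα : 0 < α)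
    (hab₁ : a₁ * b₁ ^ (-α) = 1) (hab₂ : a₂ * b₂ ^ (-α) = 1)
    (hirr : Irrational (Real.log b₁ / Real.log b₂))
    (hcont : ContinuousOn ψ (Set.Ioi 0))
    (hψnn : ∀ x : ℝ, 0 < x → 0 ≤ ψ x)
    (heq₁ : ∀ x : ℝ, 0 < x → ψ x = a₁ * ψ (b₁ * x))
    (heq₂ : ∀ x : ℝ, 0 < x → ψ x = a₂ * ψ (b₂ * x)) :
    ∃ lam : ℝ, 0 ≤ lam ∧ ∀ x : ℝ, 0 < x → ψ x = lam * x ^ (-α) := by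
  have hb₁0 : (0:ℝ) < b₁ := lt_trans one_pos hb₁
  have hb₂0 : (0:ℝ) < b₂ := lt_trans one_pos hb₂
  -- a_i = b_i ^ α
  have ha₁e : a₁ = b₁ ^ α := by
    have h : b₁ ^ (-α) ≠ 0 := (Real.rpow_pos_of_pos hb₁0 _).ne'
    rw [Real.rpow_neg hb₁0.le, ← div_eq_mul_inv, div_eq_one_iff_eq (Real.rpow_pos_of_pos hb₁0 α).ne'] at hab₁
    linarith [hab₁]
  have ha₂e : a₂ = b₂ ^ α := by
    have h : b₂ ^ (-α) ≠ 0 := (Real.rpow_pos_of_pos hb₂0 _).ne'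
    rw [Real.rpow_neg hb₂0.le, ← div_eq_mul_inv, div_eq_one_iff_eq (Real.rpow_pos_of_pos hb₂0 α).ne'] at hab₂
    linarith [hab₂]
  set g : ℝ → ℝ := fun t => ψ (Real.exp t) * Real.exp (α * t) with hg
  have hgcont : Continuous g := by
    have h1 : Continuous fun t => ψ (Real.exp t) :=
      hcont.comp_continuous Real.continuous_exp (fun t => Real.exp_pos t)
    exact h1.mul (Real.continuous_exp.comp (continuous_const.mul continuous_id))
  -- periodicity
  have hper : ∀ b a : ℝ, 1 < b → a = b ^ α → (∀ x : ℝ, 0 < x → ψ x = a * ψ (b * x)) →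
      ∀ t : ℝ, g (t + Real.log b) = g t := by
    intro b a hb hae heq t
    have hb0 : (0:ℝ) < b := lt_trans one_pos hb
    have h1 : Real.exp (t + Real.log b) = b * Real.exp t := by
      rw [Real.exp_add, Real.exp_log hb0]; ring
    have h2 : Real.exp (α * (t + Real.log b)) = Real.exp (α * t) * b ^ α := by
      rw [mul_add, Real.exp_add, Real.rpow_def_of_pos hb0, mul_comm α (Real.log b)]
    have h3 := heq (Real.exp t) (Real.exp_pos t)
    simp only [hg, h1, h2]
    rw [h3, hae]
    have hbα : (0:ℝ) < b ^ α := Real.rpow_pos_of_pos hb0 _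
    ring
  -- set of periods is a closed subgroup
  set S : AddSubgroup ℝ :=
    { carrier := {c | ∀ t, g (t + c) = g t}
      zero_mem' := by intro t; simp
      add_mem' := by
        intro c d hc hd t
        rw [← add_assoc, hd, hc]
      neg_mem' := by
        intro c hc t
        have := hc (t + -c)
        rw [add_assoc] at this
        simpa using this.symm } with hS
  have hSclosed : IsClosed (S : Set ℝ) := by
    have : (S : Set ℝ) = ⋂ t : ℝ, {c | g (t + c) = g t} := by
      ext c; simp [hS, Set.mem_iInter]
    rw [this]
    exact isClosed_iInter fun t =>
      isClosed_eq (hgcont.comp (continuous_const.add continuous_id)) continuous_const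
  have hm₁ : Real.log b₁ ∈ S := hper b₁ a₁ hb₁ ha₁e heq₁
  have hm₂ : Real.log b₂ ∈ S := hper b₂ a₂ hb₂ ha₂e heq₂
  have hlb₂ : Real.log b₂ ≠ 0 := (Real.log_pos hb₂).ne'
  -- S is dense
  have hdense : Dense (S : Set ℝ) := by
    rcases S.dense_or_cyclic with h | ⟨a, ha⟩
    · exact h
    · exfalso
      rw [← AddSubgroup.zmultiples_eq_closure] at ha
      rw [ha] at hm₁ hm₂
      obtain ⟨m, hm⟩ := hm₁
      obtain ⟨n, hn⟩ := hm₂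
      apply hirr
      refine ⟨(m : ℚ) / (n : ℚ), ?_⟩
      have ha0 : a ≠ 0 := by
        rintro rfl
        simp at hn
        exact hlb₂ hn.symm
      have hn0 : (n : ℝ) ≠ 0 := by
        rintro h
        apply hlb₂
        rw [← hn]
        simp [zsmul_eq_mul, h]
      push_cast
      rw [← hm, ← hn]
      simp only [zsmul_eq_mul]
      field_simp
  -- so S = everything, g constant
  have hall : ∀ c : ℝ, c ∈ S := by
    have huniv : (S : Set ℝ) = Set.univ := by
      rw [← hSclosed.closure_eq]; exact hdense.closure_eq
    intro c
    have : c ∈ (S : Set ℝ) := huniv ▸ Set.mem_univ c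
    exact this
  have hgconst : ∀ t : ℝ, g t = g 0 := by
    intro t
    have := hall t 0
    simpa using this
  refine ⟨ψ 1, hψnn 1 one_pos, fun x hx => ?_⟩
  have h0 : g 0 = ψ 1 := by simp [hg]
  have h1 : g (Real.log x) = ψ x * x ^ α := by
    simp [hg, Real.exp_log hx, Real.rpow_def_of_pos hx, mul_comm α (Real.log x)]
  have h2 := hgconst (Real.log x)
  rw [h1, h0] at h2
  have hxα : (0:ℝ) < x ^ α := Real.rpow_pos_of_pos hx _
  rw [Real.rpow_neg hx.le]
  field_simp
  linarith [h2]
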